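/- For every t > 0, the identity ∑_{k ∈ ℤ} (−1)^k · exp(−t π² k² / 8) = √(8/(π t)) · ∑_{k ∈ ℤ} exp(−8 (k + 1/2)² / t) holds, where both series converge absolutely. -/

import Mathlib

open Complex Real

lemma aux_summable (c d : ℝ) (hc : 0 < c) :
    Summable fun k : ℤ => Real.exp (-c * (k : ℝ) ^ 2 + d * k) := by
  have hsum := summable_pow_mul_jacobiTheta₂_term_bound (|d| / (2 * π))
    (div_pos hc Real.pi_pos) 0
  refine hsum.of_nonneg_of_le (fun k => (Real.exp_pos _).le) (fun k => ?_)
  rw [pow_zero, one_mul]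
  apply Real.exp_le_exp.mpr
  have hπ : (π : ℝ) ≠ 0 := Real.pi_ne_zero
  have : -π * (c / π * (k : ℝ) ^ 2 - 2 * (|d| / (2 * π)) * (|k| : ℤ)) =
      -c * (k : ℝ) ^ 2 + |d| * |(k : ℝ)| := by
    push_cast
    field_simp
    ring
  rw [this]
  have : d * (k : ℝ) ≤ |d| * |(k : ℝ)| := by
    calc d * (k : ℝ) ≤ |d * (k : ℝ)| := le_abs_self _
    _ = |d| * |(k : ℝ)| := abs_mul _ _
  linarith

/-- Poisson summation identity:
`∑_{k∈ℤ} (−1)^k e^{−tπ²k²/8} = √(8/(πt)) ∑_{k∈ℤ} e^{−8(k+1/2)²/t}` for `t > 0`. -/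
theorem stmt_11 (t : ℝ) (ht : 0 < t) :
    Summable (fun k : ℤ => (-1 : ℝ) ^ k * Real.exp (-t * Real.pi ^ 2 * (k : ℝ) ^ 2 / 8)) ∧
    Summable (fun k : ℤ => Real.exp (-8 * ((k : ℝ) + 1 / 2) ^ 2 / t)) ∧
    ∑' k : ℤ, (-1 : ℝ) ^ k * Real.exp (-t * Real.pi ^ 2 * (k : ℝ) ^ 2 / 8)
      = Real.sqrt (8 / (Real.pi * t)) * ∑' k : ℤ, Real.exp (-8 * ((k : ℝ) + 1 / 2) ^ 2 / t) := by
  have ht' : (t : ℝ) ≠ 0 := ht.ne'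
  have hπ : (0:ℝ) < π := Real.pi_pos
  have hS1 : Summable (fun k : ℤ => (-1 : ℝ) ^ k * Real.exp (-t * π ^ 2 * (k : ℝ) ^ 2 / 8)) := by
    rw [← summable_abs_iff]
    have := aux_summable (t * π ^ 2 / 8) 0 (by positivity)
    refine this.congr fun k => ?_
    rw [abs_mul, abs_of_pos (Real.exp_pos _),
      show |(-1:ℝ) ^ k| = 1 by rcases Int.even_or_odd k with h|h <;> simp [h.neg_one_zpow], one_mul]
    congr 1
    ring
  have hS2 : Summable (fun k : ℤ => Real.exp (-8 * ((k : ℝ) + 1 / 2) ^ 2 / t)) := by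
    have := (aux_summable (8 / t) (-8 / t) (by positivity)).mul_left (Real.exp (-2 / t))
    refine this.congr fun k => ?_
    rw [← Real.exp_add]
    congr 1
    field_simp
    ring
  refine ⟨hS1, hS2, ?_⟩
  -- apply the complex Poisson summation
  have ha : 0 < ((t * π / 8 : ℝ) : ℂ).re := by
    rw [Complex.ofReal_re]; positivity
  have key := Complex.tsum_exp_neg_quadratic ha (I / 2)
  have hL : ∀ n : ℤ, cexp (-(π:ℂ) * ((t * π / 8 : ℝ) : ℂ) * (n:ℂ) ^ 2 + 2 * π * (I / 2) * n)
      = (((-1 : ℝ) ^ n * Real.exp (-t * π ^ 2 * (n : ℝ) ^ 2 / 8) : ℝ) : ℂ) := by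
    intro n
    rw [show (-(π:ℂ) * ((t * π / 8 : ℝ) : ℂ) * (n:ℂ) ^ 2 + 2 * π * (I / 2) * n)
        = ((-t * π ^ 2 * (n : ℝ) ^ 2 / 8 : ℝ) : ℂ) + (n : ℂ) * ((π:ℂ) * I) by
      push_cast; ring]
    rw [Complex.exp_add, Complex.exp_int_mul, Complex.exp_pi_mul_I,
      ← Complex.ofReal_exp]
    push_cast
    ring
  have hR : ∀ n : ℤ, cexp (-(π:ℂ) / ((t * π / 8 : ℝ) : ℂ) * ((n:ℂ) + I * (I / 2)) ^ 2)
      = ((Real.exp (-8 * ((n : ℝ) - 1 / 2) ^ 2 / t) : ℝ) : ℂ) := by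
    intro n
    rw [show ((n:ℂ) + I * (I / 2)) = ((n:ℂ) - 1/2) by
      rw [show I * (I/2) = I*I/2 by ring, Complex.I_mul_I]; ring]
    rw [show (-(π:ℂ) / ((t * π / 8 : ℝ) : ℂ) * ((n:ℂ) - 1/2) ^ 2)
        = ((-8 * ((n : ℝ) - 1 / 2) ^ 2 / t : ℝ) : ℂ) by
      have hπc : ((π:ℝ):ℂ) ≠ 0 := Complex.ofReal_ne_zero.mpr hπ.ne'
      have htc : ((t:ℝ):ℂ) ≠ 0 := Complex.ofReal_ne_zero.mpr ht'
      push_cast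
      field_simp]
    rw [← Complex.ofReal_exp]
  have hpow : ((t * π / 8 : ℝ) : ℂ) ^ (1/2 : ℂ) = ((Real.sqrt (t * π / 8) : ℝ) : ℂ) := by
    rw [show (1/2 : ℂ) = ((1/2 : ℝ) : ℂ) by norm_num,
      ← Complex.ofReal_cpow (by positivity), Real.sqrt_eq_rpow]
  have hsqrt : (1 : ℝ) / Real.sqrt (t * π / 8) = Real.sqrt (8 / (π * t)) := by
    rw [one_div, ← Real.sqrt_inv]
    congr 1
    field_simp
  -- reindexing
  have hreindex : (∑' k : ℤ, Real.exp (-8 * ((k : ℝ) - 1 / 2) ^ 2 / t))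
      = ∑' k : ℤ, Real.exp (-8 * ((k : ℝ) + 1 / 2) ^ 2 / t) := by
    rw [← (Equiv.addRight (1 : ℤ)).tsum_eq (fun k : ℤ => Real.exp (-8 * ((k : ℝ) - 1 / 2) ^ 2 / t))]
    refine tsum_congr fun k => ?_
    simp only [Equiv.coe_addRight]
    push_cast
    ring_nf
  rw [← Complex.ofReal_inj]
  calc ((∑' k : ℤ, (-1 : ℝ) ^ k * Real.exp (-t * π ^ 2 * (k : ℝ) ^ 2 / 8) : ℝ) : ℂ)
      = ∑' n : ℤ, cexp (-(π:ℂ) * ((t * π / 8 : ℝ) : ℂ) * (n:ℂ) ^ 2 + 2 * π * (I / 2) * n) := by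
        rw [Complex.ofReal_tsum]; exact tsum_congr fun n => (hL n).symm
    _ = 1 / ((t * π / 8 : ℝ) : ℂ) ^ (1/2 : ℂ)
        * ∑' n : ℤ, cexp (-(π:ℂ) / ((t * π / 8 : ℝ) : ℂ) * ((n:ℂ) + I * (I / 2)) ^ 2) := key
    _ = ((Real.sqrt (8 / (π * t)) * ∑' k : ℤ, Real.exp (-8 * ((k : ℝ) + 1 / 2) ^ 2 / t) : ℝ) : ℂ) := by
        rw [hpow, show (∑' n : ℤ, cexp (-(π:ℂ) / ((t * π / 8 : ℝ) : ℂ) * ((n:ℂ) + I * (I / 2)) ^ 2))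
            = ((∑' k : ℤ, Real.exp (-8 * ((k : ℝ) - 1 / 2) ^ 2 / t) : ℝ) : ℂ) by
          rw [Complex.ofReal_tsum]; exact tsum_congr hR]
        rw [hreindex, Complex.ofReal_mul, ← hsqrt]
        push_cast
        ring
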